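/- For real numbers a > 0, the function λ ↦ (e^{2λa} - e^{λa})/(e^{2λa} - 1) is strictly monotone increasing on (0, ∞). -/

import Mathlib

open Real Set

theorem F_strictMonoOn (a : ℝ) (ha : 0 < a) :
    StrictMonoOn (fun l : ℝ => (exp (2 * l * a) - exp (l * a)) / (exp (2 * l * a) - 1))
      (Ioi (0 : ℝ)) := by
  have key : ∀ l : ℝ, 0 < l →
      (exp (2 * l * a) - exp (l * a)) / (exp (2 * l * a) - 1)
        = exp (l * a) / (exp (l * a) + 1) := by
    intro l hl
    have ht : 1 < exp (l * a) := by
      rw [show (1:ℝ) = exp 0 by simp]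
      exact exp_lt_exp.mpr (by positivity)
    have h2 : exp (2 * l * a) = exp (l * a) * exp (l * a) := by
      rw [← exp_add]; ring_nf
    rw [h2]
    have hne : exp (l * a) - 1 ≠ 0 := by linarith
    have hne2 : exp (l * a) * exp (l * a) - 1 ≠ 0 := by nlinarith
    have hne3 : exp (l * a) ^ 2 - 1 ≠ 0 := by nlinarith
    field_simp
    ring
  intro x hx y hy hxy
  simp only [mem_Ioi] at hx hy
  simp only [key x hx, key y hy]
  have hxe : 1 < exp (x * a) := by
    rw [show (1:ℝ) = exp 0 by simp]; exact exp_lt_exp.mpr (by positivity)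
  have hye : 1 < exp (y * a) := by
    rw [show (1:ℝ) = exp 0 by simp]; exact exp_lt_exp.mpr (by positivity)
  have hlt : exp (x * a) < exp (y * a) :=
    exp_lt_exp.mpr (by nlinarith)
  rw [div_lt_div_iff₀ (by linarith) (by linarith)]
  nlinarith
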